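/- Under the hypotheses of the previous estimate (pointwise bounds c_f·f' ≤ f_ε' ≤ C_f·f', c_σ·σ̄ ≤ σ ≤ C_σ·σ̄, and ∫_ℝ ρ(y)² dy < ∞), for every δ > 0 there exists M > 0, independent of ε, such that for all ε > 0: ∫_{|y| > M} ρ_ε(y)² dy < δ, i.e., the tails of the densities ρ_ε² are uniformly small. -/

import Mathlib

open MeasureTheory Real

theorem stmt_2
    (σ σbar f fd g ρ : ℝ → ℝ)
    (fε fεd gε ρε : ℝ → ℝ → ℝ)  -- families indexed by ε
    (a A cσ Cσ cf Cf : ℝ)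
    (ha : 0 < a) (hσ : ∀ y, a ≤ σ y ∧ σ y ≤ A)
    (hσbar : ∀ y, 0 < σbar y)
    (hcσ : 0 < cσ) (hCσ : 0 < Cσ)
    (hσb : ∀ y, cσ * σbar y ≤ σ y ∧ σ y ≤ Cσ * σbar y)
    (hf : ∀ x, HasDerivAt f (fd x) x)
    (hfε : ∀ ε, 0 < ε → ∀ x, HasDerivAt (fε ε) (fεd ε x) x)
    (hfd : ∀ x, 0 < fd x) (hfεd : ∀ ε, 0 < ε → ∀ x, 0 < fεd ε x)
    (hf0 : f 0 = 0) (hfε0 : ∀ ε, 0 < ε → fε ε 0 = 0)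
    (hcf : 0 < cf) (hCf : 0 < Cf)
    (hbound : ∀ ε, 0 < ε → ∀ y, cf * fd y ≤ fεd ε y ∧ fεd ε y ≤ Cf * fd y)
    (hgl : Function.LeftInverse g f) (hgr : Function.RightInverse g f)
    (hgεl : ∀ ε, 0 < ε → Function.LeftInverse (gε ε) (fε ε))
    (hgεr : ∀ ε, 0 < ε → Function.RightInverse (gε ε) (fε ε))
    (hρ : ∀ x, ρ x = 1 / (σbar (g x) * fd (g x)))
    (hρε : ∀ ε, 0 < ε → ∀ x, ρε ε x = 1 / (σ (gε ε x) * fεd ε (gε ε x)))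
    (hint : Integrable fun y => ρ y ^ 2) :
    ∀ δ : ℝ, 0 < δ → ∃ M : ℝ, 0 < M ∧
      ∀ ε, 0 < ε → (∫ y in {y : ℝ | M < |y|}, ρε ε y ^ 2) < δ := by
  intro δ hδ
  set K : ℝ := 1 / (cσ ^ 2 * cf) with hKdef
  have hK : 0 < K := by positivity
  -- f is strictly monotone and continuous
  have hfm : StrictMono f :=
    strictMono_of_deriv_pos fun x => by rw [(hf x).deriv]; exact hfd x
  have hfc : Continuous f := continuous_iff_continuousAt.mpr fun x => (hf x).continuousAt
  -- tail of ρ² is small: find n ≥ 1 with tail integral < δ / K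
  obtain ⟨n, hn1, hn⟩ : ∃ n : ℝ, 1 ≤ n ∧ (∫ y in {y : ℝ | n < |y|}, ρ y ^ 2) < δ / K := by
    set S : ℕ → Set ℝ := fun k => {y : ℝ | |y| ≤ (k : ℝ) + 1} with hS
    have hSm : ∀ k, MeasurableSet (S k) := fun k =>
      measurableSet_le (measurable_abs) measurable_const
    have hSmono : Monotone S := by
      intro i j hij y hy
      simp only [S, Set.mem_setOf_eq] at *
      have : (i : ℝ) ≤ j := by exact_mod_cast hij
      linarith
    have hSU : (⋃ k, S k) = Set.univ := by
      ext y
      simp only [Set.mem_iUnion, Set.mem_univ, iff_true, S, Set.mem_setOf_eq]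
      exact ⟨⌈|y|⌉₊, by have := Nat.le_ceil |y|; linarith⟩
    have htend := tendsto_setIntegral_of_monotone hSm hSmono (by rw [hSU]; exact hint.integrableOn)
    rw [hSU, setIntegral_univ] at htend
    rw [Metric.tendsto_atTop] at htend
    obtain ⟨N, hN⟩ := htend (δ / K) (by positivity)
    have hdist := hN N le_rfl
    refine ⟨(N : ℝ) + 1, by norm_num [Nat.cast_nonneg], ?_⟩
    have hcompl : {y : ℝ | (N : ℝ) + 1 < |y|} = (S N)ᶜ := by
      ext y; simp [S, Set.mem_setOf_eq, not_le]
    have hsplit : (∫ y in S N, ρ y ^ 2) + (∫ y in (S N)ᶜ, ρ y ^ 2) = ∫ y, ρ y ^ 2 :=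
      integral_add_compl (hSm N) hint
    rw [hcompl]
    rw [Real.dist_eq] at hdist
    have := abs_lt.mp hdist
    linarith [this.1, this.2]
  have hMpos : 0 < Cf * n := by positivity
  refine ⟨Cf * n, hMpos, ?_⟩
  intro ε hε
  -- notation
  have hφd : ∀ x, HasDerivAt (fε ε) (fεd ε x) x := hfε ε hε
  have hφm : StrictMono (fε ε) :=
    strictMono_of_deriv_pos fun x => by rw [(hφd x).deriv]; exact hfεd ε hε x
  have hφc : Continuous (fε ε) := continuous_iff_continuousAt.mpr fun x => (hφd x).continuousAt
  -- key pointwise comparison |fε ε z| ≤ Cf * |f z|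
  have hcomp : ∀ z, |fε ε z| ≤ Cf * |f z| := by
    have hder : ∀ z, HasDerivAt (fun w => fε ε w - Cf * f w) (fεd ε z - Cf * fd z) z :=
      fun z => (hφd z).sub ((hf z).const_mul Cf)
    have hanti : Antitone (fun w => fε ε w - Cf * f w) :=
      antitone_of_hasDerivAt_nonpos hder fun z => by
        have := (hbound ε hε z).2; simp only [Pi.zero_apply]; linarith
    have h0 : fε ε 0 - Cf * f 0 = 0 := by rw [hfε0 ε hε, hf0]; ring
    intro z
    rcases le_total 0 z with hz | hz
    · have h1 : fε ε z - Cf * f z ≤ 0 := by have h := hanti hz; have h' : fε ε z - Cf * f z ≤ fε ε 0 - Cf * f 0 := h; linarith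
      have h2 : 0 ≤ fε ε z := by
        have := hφm.monotone hz; rwa [hfε0 ε hε] at this
      have h3 : 0 ≤ f z := by have := hfm.monotone hz; rwa [hf0] at this
      rw [abs_of_nonneg h2, abs_of_nonneg h3]; linarith
    · have h1 : 0 ≤ fε ε z - Cf * f z := by have h := hanti hz; have h' : fε ε 0 - Cf * f 0 ≤ fε ε z - Cf * f z := h; linarith
      have h2 : fε ε z ≤ 0 := by
        have := hφm.monotone hz; rwa [hfε0 ε hε] at this
      have h3 : f z ≤ 0 := by have := hfm.monotone hz; rwa [hf0] at this
      rw [abs_of_nonpos h2, abs_of_nonpos h3]; linarith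
  -- the two sets
  set s : Set ℝ := {z : ℝ | Cf * n < |fε ε z|} with hs_def
  set s' : Set ℝ := {z : ℝ | n < |f z|} with hs'_def
  have hs : MeasurableSet s :=
    (isOpen_lt continuous_const (hφc.abs)).measurableSet
  have hs' : MeasurableSet s' :=
    (isOpen_lt continuous_const (hfc.abs)).measurableSet
  have hsub : s ⊆ s' := by
    intro z hz
    simp only [hs_def, hs'_def, Set.mem_setOf_eq] at *
    have := hcomp z
    have : Cf * n < Cf * |f z| := lt_of_lt_of_le hz this
    exact lt_of_mul_lt_mul_left this hCf.le
  -- image identities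
  have himg : fε ε '' s = {y : ℝ | Cf * n < |y|} := by
    ext y
    simp only [Set.mem_image, hs_def, Set.mem_setOf_eq]
    constructor
    · rintro ⟨z, hz, rfl⟩; exact hz
    · intro hy; exact ⟨gε ε y, by rwa [hgεr ε hε y], hgεr ε hε y⟩
  have himg' : f '' s' = {y : ℝ | n < |y|} := by
    ext y
    simp only [Set.mem_image, hs'_def, Set.mem_setOf_eq]
    constructor
    · rintro ⟨z, hz, rfl⟩; exact hz
    · intro hy; exact ⟨g y, by rwa [hgr y], hgr y⟩
  have hinj : Set.InjOn (fε ε) s := ((hgεl ε hε).injective).injOn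
  have hinj' : Set.InjOn f s' := (hgl.injective).injOn
  -- first change of variables
  have h1 : (∫ y in {y : ℝ | Cf * n < |y|}, ρε ε y ^ 2)
      = ∫ z in s, |fεd ε z| • (ρε ε (fε ε z)) ^ 2 := by
    rw [← himg]
    exact integral_image_eq_integral_abs_deriv_smul hs
      (fun x _ => (hφd x).hasDerivWithinAt) hinj _
  -- rewrite the integrand
  have hσpos : ∀ z, 0 < σ z := fun z => lt_of_lt_of_le ha (hσ z).1
  have hintegrand : ∀ z, |fεd ε z| • (ρε ε (fε ε z)) ^ 2 = 1 / (σ z ^ 2 * fεd ε z) := by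
    intro z
    have hρεz : ρε ε (fε ε z) = 1 / (σ z * fεd ε z) := by
      rw [hρε ε hε, hgεl ε hε z]
    rw [hρεz, smul_eq_mul, abs_of_pos (hfεd ε hε z)]
    have h1 : σ z ≠ 0 := (hσpos z).ne'
    have h2 : fεd ε z ≠ 0 := (hfεd ε hε z).ne'
    field_simp
  -- second change of variables
  have h2 : (∫ z in s', |fd z| * (ρ (f z)) ^ 2) = ∫ y in {y : ℝ | n < |y|}, ρ y ^ 2 := by
    rw [← himg']
    simpa only [smul_eq_mul] using (integral_image_eq_integral_abs_deriv_smul hs'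
      (fun x _ => (hf x).hasDerivWithinAt) hinj' (fun y => ρ y ^ 2)).symm
  -- integrability of the comparison function
  have hInt' : IntegrableOn (fun z => |fd z| * (ρ (f z)) ^ 2) s' := by
    have := (integrableOn_image_iff_integrableOn_abs_deriv_smul hs'
      (fun x _ => (hf x).hasDerivWithinAt) hinj' (fun y => ρ y ^ 2)).mp
      (by rw [himg']; exact hint.integrableOn)
    simpa only [smul_eq_mul] using this
  have hIntK : IntegrableOn (fun z => K * (|fd z| * (ρ (f z)) ^ 2)) s' :=
    hInt'.const_mul K
  -- pointwise bound on s'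
  have hpt : ∀ z, 1 / (σ z ^ 2 * fεd ε z) ≤ K * (|fd z| * (ρ (f z)) ^ 2) := by
    intro z
    have hρfz : ρ (f z) = 1 / (σbar z * fd z) := by rw [hρ, hgl z]
    have hσbz := hσbar z
    have hfdz := hfd z
    have hσz := hσpos z
    have hφdz := hfεd ε hε z
    have hb1 := (hσb z).1
    have hb2 := (hbound ε hε z).1
    rw [hρfz, abs_of_pos hfdz]
    have hRHS : K * (fd z * (1 / (σbar z * fd z)) ^ 2) = K / (σbar z ^ 2 * fd z) := by
      field_simp
    rw [hRHS]
    rw [div_le_div_iff₀ (by positivity) (by positivity), hKdef, one_mul,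
      div_mul_eq_mul_div, le_div_iff₀ (by positivity : (0:ℝ) < cσ ^ 2 * cf), one_mul]
    have hσ2 : cσ ^ 2 * σbar z ^ 2 ≤ σ z ^ 2 := by
      nlinarith [mul_le_mul hb1 hb1 (by positivity : (0:ℝ) ≤ cσ * σbar z) hσz.le]
    nlinarith [mul_le_mul hσ2 hb2 (by positivity) (by positivity : (0:ℝ) ≤ σ z ^ 2)]
  -- main chain of inequalities
  rw [h1]
  rw [setIntegral_congr_fun hs (fun z _ => hintegrand z)]
  by_cases hI : IntegrableOn (fun z => 1 / (σ z ^ 2 * fεd ε z)) s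
  · have step1 : (∫ z in s, 1 / (σ z ^ 2 * fεd ε z))
        ≤ ∫ z in s, K * (|fd z| * (ρ (f z)) ^ 2) :=
      setIntegral_mono_on hI (hIntK.mono_set hsub) hs (fun z _ => hpt z)
    have step2 : (∫ z in s, K * (|fd z| * (ρ (f z)) ^ 2))
        ≤ ∫ z in s', K * (|fd z| * (ρ (f z)) ^ 2) := by
      apply setIntegral_mono_set hIntK
      · apply Filter.Eventually.of_forall
        intro z
        have h1 : (0:ℝ) ≤ |fd z| * (ρ (f z)) ^ 2 := by positivity
        exact mul_nonneg hK.le h1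
      · exact hsub.eventuallyLE
    have step3 : (∫ z in s', K * (|fd z| * (ρ (f z)) ^ 2))
        = K * ∫ y in {y : ℝ | n < |y|}, ρ y ^ 2 := by
      rw [integral_const_mul, h2]
    have : K * (∫ y in {y : ℝ | n < |y|}, ρ y ^ 2) < K * (δ / K) := by
      exact mul_lt_mul_of_pos_left hn hK
    rw [mul_div_cancel₀ _ hK.ne'] at this
    linarith
  · rw [integral_undef hI]
    exact hδ
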